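/- arXiv:math/0603474 — 2 statements merged into one kernel-verified Lean document; each statement's English description precedes it below -/
import Mathlib

section
/- Let H be a Hilbert space and (Σ_n) a sequence of finite signed Borel measures on H converging to a finite signed measure Σ in the sense that ∫ φ dΣ_n → ∫ φ dΣ for all bounded continuous φ, with |Σ_n|(H) → |Σ|(H) < ∞. Suppose moreover |Σ|(O) ≤ liminf_n |Σ_n|(O) for every open O (lower semicontinuity of total variation on open sets). Then for every m ≥ 1 there exists a compact set J_m ⊂ H such that |Σ_n|(H \ J_m) ≤ 1/m for all n. -/
open Filter Topology MeasureTheory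
open scoped ENNReal NNReal

/-- Integral of a function against a finite signed measure, via the Jordan decomposition. -/
noncomputable def signedIntegral {E : Type*} [MeasurableSpace E]
    (M : MeasureTheory.SignedMeasure E) (φ : E → ℝ) : ℝ :=
  (∫ x, φ x ∂M.toJordanDecomposition.posPart) - ∫ x, φ x ∂M.toJordanDecomposition.negPart

private lemma ev_le_add_of_le_liminf {f : ℕ → ℝ≥0∞} {c δ : ℝ≥0∞} (hc : c ≠ ⊤) (hδ : δ ≠ 0)
    (h : c ≤ liminf f atTop) : ∀ᶠ n in atTop, c ≤ f n + δ := by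
  by_cases hcd : c ≤ δ
  · exact Eventually.of_forall fun n => hcd.trans le_add_self
  · push_neg at hcd
    have h1 : c - δ < liminf f atTop :=
      lt_of_lt_of_le (ENNReal.sub_lt_self hc (lt_of_le_of_lt (zero_le : 0 ≤ δ) hcd).ne' hδ) h
    filter_upwards [eventually_lt_of_lt_liminf h1] with n hn
    exact tsub_le_iff_right.mp hn.le

/-- If signed measures `Σ_n` on a separable Hilbert space converge weakly to `Σ`, with
convergence of the total masses `|Σ_n|(H) → |Σ|(H) < ∞` and lower semicontinuity of the
total variation on open sets, then the family `(|Σ_n|)_n` is tight. -/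
theorem total_variations_tight_of_weak_convergence
    {H : Type*} [NormedAddCommGroup H] [InnerProductSpace ℝ H] [CompleteSpace H]
    [SecondCountableTopology H] [MeasurableSpace H] [BorelSpace H]
    (Sn : ℕ → MeasureTheory.SignedMeasure H) (S' : MeasureTheory.SignedMeasure H)
    (hweak : ∀ φ : H → ℝ, Continuous φ → (∃ C, ∀ x, |φ x| ≤ C) →
      Tendsto (fun n => signedIntegral (Sn n) φ) atTop (𝓝 (signedIntegral S' φ)))
    (hfin : S'.totalVariation Set.univ < ⊤)
    (hmass : Tendsto (fun n => ((Sn n).totalVariation Set.univ).toReal) atTop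
      (𝓝 ((S'.totalVariation Set.univ).toReal)))
    (hlsc : ∀ O : Set H, IsOpen O →
      S'.totalVariation O ≤ liminf (fun n => (Sn n).totalVariation O) atTop) :
    ∀ m : ℕ, 1 ≤ m → ∃ J : Set H, IsCompact J ∧
      ∀ n, (Sn n).totalVariation Jᶜ ≤ 1 / (m : ENNReal) := by
  intro m hm
  set μ : ℕ → Measure H := fun n => (Sn n).totalVariation with hμ
  set ν : Measure H := S'.totalVariation with hν
  haveI : ∀ n, IsFiniteMeasure (μ n) := fun n => by
    rw [hμ]; unfold MeasureTheory.SignedMeasure.totalVariation; infer_instance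
  haveI : IsFiniteMeasure ν := by
    rw [hν]; unfold MeasureTheory.SignedMeasure.totalVariation; infer_instance
  -- dense sequence and approximating open sets
  set x : ℕ → H := TopologicalSpace.denseSeq H with hxdef
  have hx : DenseRange x := TopologicalSpace.denseRange_denseSeq H
  set A : ℕ → ℕ → Set H := fun k i => ⋃ j ∈ Set.Iic i, Metric.ball (x j) (1 / (k + 1)) with hA
  have hAopen : ∀ k i, IsOpen (A k i) := fun k i =>
    isOpen_biUnion fun j _ => Metric.isOpen_ball
  have hAmono : ∀ k, Monotone (A k) := fun k i i' hii' =>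
    Set.biUnion_subset_biUnion_left (Set.Iic_subset_Iic.mpr hii')
  have hAunion : ∀ k, ⋃ i, A k i = Set.univ := by
    intro k
    apply Set.eq_univ_iff_forall.mpr
    intro y
    obtain ⟨j, hj⟩ := hx.exists_dist_lt y (show (0:ℝ) < 1 / (k + 1) by positivity)
    exact Set.mem_iUnion.mpr ⟨j, Set.mem_biUnion (Set.mem_Iic.mpr le_rfl)
      (by simpa [dist_comm] using hj)⟩
  set ε : ℕ → ℝ≥0∞ := fun k => (1 / m) * 2⁻¹ ^ (k + 1) with hε
  have hm0 : (m : ℝ≥0∞) ≠ 0 := by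
    simp only [ne_eq, Nat.cast_eq_zero]; omega
  have hεpos : ∀ k, ε k ≠ 0 := by
    intro k
    simp only [hε, one_div, mul_eq_zero, ENNReal.inv_eq_zero, ENNReal.natCast_ne_top,
      pow_eq_zero_iff', ENNReal.inv_eq_zero, ENNReal.ofNat_ne_top, false_and, or_false]
    exact fun h => absurd h (by simp [ENNReal.natCast_ne_top])
  -- uniform small complements for finite unions of balls
  have key : ∀ k : ℕ, ∃ I : ℕ, ∀ n, μ n (A k I)ᶜ ≤ ε k := by
    intro k
    set δ : ℝ≥0∞ := ε k / 4 with hδdef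
    have hδ0 : δ ≠ 0 := by
      simp only [hδdef, ne_eq, ENNReal.div_eq_zero_iff]
      push_neg
      exact ⟨hεpos k, by norm_num⟩
    have hδ3 : δ + δ + δ ≤ ε k := by
      have h4 : δ + δ + δ ≤ 4 * δ := by
        have h : (4 : ℝ≥0∞) * δ = δ + δ + δ + δ := by ring
        rw [h]; exact le_add_right le_rfl
      refine h4.trans ?_
      rw [hδdef, ENNReal.mul_div_cancel' (by norm_num) (by norm_num)]
    -- step 1 : choose i₀ for ν
    have h1 : Tendsto (fun i => ν (A k i)) atTop (𝓝 (ν Set.univ)) := by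
      have := tendsto_measure_iUnion_atTop (μ := ν) (hAmono k)
      rwa [hAunion k] at this
    have h1' : ∀ᶠ i in atTop, ν Set.univ ≤ ν (A k i) + δ :=
      ev_le_add_of_le_liminf (measure_ne_top ν _) hδ0 (le_of_eq h1.liminf_eq.symm)
    obtain ⟨i₀, hi₀⟩ := h1'.exists
    -- step 2 : eventual lower bound on μ n (A k i₀) from lsc
    have h2 : ∀ᶠ n in atTop, ν (A k i₀) ≤ μ n (A k i₀) + δ :=
      ev_le_add_of_le_liminf (measure_ne_top ν _) hδ0 (hlsc _ (hAopen k i₀))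
    -- step 3 : eventual upper bound on total masses
    have h3 : Tendsto (fun n => μ n Set.univ) atTop (𝓝 (ν Set.univ)) := by
      rw [← ENNReal.tendsto_toReal_iff (fun n => measure_ne_top (μ n) _) (measure_ne_top ν _)]
      exact hmass
    have h3' : ∀ᶠ n in atTop, μ n Set.univ ≤ ν Set.univ + δ := by
      filter_upwards [h3.eventually_lt_const
        (ENNReal.lt_add_right (measure_ne_top ν _) hδ0)] with n hn
      exact hn.le
    obtain ⟨N, hN⟩ := eventually_atTop.mp (h2.and h3')
    -- for n < N : choose individual indices
    have hsmall : ∀ n, ∃ i, μ n (A k i)ᶜ ≤ δ + δ + δ := by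
      intro n
      have htend : Tendsto (fun i => μ n (A k i)) atTop (𝓝 (μ n Set.univ)) := by
        have := tendsto_measure_iUnion_atTop (μ := μ n) (hAmono k)
        rwa [hAunion k] at this
      have := ev_le_add_of_le_liminf (measure_ne_top (μ n) _) hδ0
        (le_of_eq htend.liminf_eq.symm)
      obtain ⟨i, hi⟩ := this.exists
      refine ⟨i, ?_⟩
      rw [measure_compl (hAopen k i).measurableSet (measure_ne_top _ _)]
      refine tsub_le_iff_right.mpr (le_trans hi ?_)
      exact add_le_add (le_add_self.trans (le_add_self)) le_rfl |>.trans
        (by rw [add_comm]; exact le_of_eq (by ring))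
    choose f hf using hsmall
    refine ⟨max i₀ ((Finset.range N).sup f), fun n => ?_⟩
    rcases lt_or_ge n N with hn | hn
    · have hfle : f n ≤ max i₀ ((Finset.range N).sup f) :=
        le_max_of_le_right (Finset.le_sup (Finset.mem_range.mpr hn))
      refine le_trans (measure_mono (Set.compl_subset_compl.mpr (hAmono k hfle))) ?_
      exact (hf n).trans hδ3
    · obtain ⟨hb2, hb3⟩ := hN n hn
      have hi₀le : i₀ ≤ max i₀ ((Finset.range N).sup f) := le_max_left _ _
      refine le_trans (measure_mono (Set.compl_subset_compl.mpr (hAmono k hi₀le))) ?_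
      have hchain : μ n Set.univ ≤ μ n (A k i₀) + (δ + δ + δ) := by
        calc μ n Set.univ ≤ ν Set.univ + δ := hb3
          _ ≤ (ν (A k i₀) + δ) + δ := add_le_add hi₀ le_rfl
          _ ≤ ((μ n (A k i₀) + δ) + δ) + δ := add_le_add (add_le_add hb2 le_rfl) le_rfl
          _ = μ n (A k i₀) + (δ + δ + δ) := by ring
      rw [measure_compl (hAopen k i₀).measurableSet (measure_ne_top _ _)]
      exact (tsub_le_iff_right.mpr (by rwa [add_comm])).trans hδ3
  choose I hI using key
  refine ⟨⋂ k, closure (A k (I k)), ?_, ?_⟩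
  · -- compactness
    refine TotallyBounded.isCompact_of_isClosed ?_ (isClosed_iInter fun k => isClosed_closure)
    rw [Metric.totallyBounded_iff]
    intro r hr
    obtain ⟨k, hk⟩ := exists_nat_one_div_lt hr
    refine ⟨x '' Set.Iic (I k), (Set.finite_Iic _).image x, ?_⟩
    have hsub : closure (A k (I k)) ⊆ ⋃ j ∈ Set.Iic (I k), Metric.ball (x j) r := by
      rw [hA]
      rw [(Set.finite_Iic (I k)).closure_biUnion]
      refine Set.iUnion₂_mono fun j _ => ?_
      exact (Metric.closure_ball_subset_closedBall).trans (Metric.closedBall_subset_ball hk)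
    refine le_trans (Set.iInter_subset _ k) (hsub.trans ?_)
    rw [Set.biUnion_image]
  · -- mass bound
    intro n
    rw [Set.compl_iInter]
    refine le_trans (measure_iUnion_le _) ?_
    have hterm : ∀ k, μ n (closure (A k (I k)))ᶜ ≤ ε k := fun k =>
      le_trans (measure_mono (Set.compl_subset_compl.mpr subset_closure)) (hI k n)
    refine le_trans (ENNReal.tsum_le_tsum hterm) ?_
    rw [hε]
    simp only []
    rw [ENNReal.tsum_mul_left, ENNReal.tsum_geometric_add_one, ENNReal.one_sub_inv_two, inv_inv,
      ENNReal.inv_mul_cancel two_ne_zero ENNReal.ofNat_ne_top, mul_one]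
end

section
/- Let m_n (n ∈ ℕ) and m be finite positive Borel measures on (−∞, 0] with m_n((−∞,0]) = m((−∞,0]) < ∞, and suppose ∫ (λ−x)^{−ℓ} m_n(dx) → ∫ (λ−x)^{−ℓ} m(dx) for all λ > 0 and all ℓ ∈ ℕ. Then ∫ e^{tx} m_n(dx) → ∫ e^{tx} m(dx) for all t > 0. -/
open Filter Topology MeasureTheory

lemma laplace_aux_bound (t : ℝ) (ht : 0 < t) (y : ℝ) (hy : 0 < y) :
    Real.exp (t * (1 - y⁻¹)) ≤ Real.exp t / t * y := by
  have h1 : t * (1 - y⁻¹) = t - t * y⁻¹ := by ring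
  rw [h1, Real.exp_sub]
  have h2 : t * y⁻¹ ≤ Real.exp (t * y⁻¹) := by
    have := Real.add_one_le_exp (t * y⁻¹); linarith
  have h3 : 0 < t * y⁻¹ := by positivity
  calc Real.exp t / Real.exp (t * y⁻¹) ≤ Real.exp t / (t * y⁻¹) :=
        div_le_div_of_nonneg_left (Real.exp_pos t).le h3 h2
    _ = Real.exp t / t * y := by field_simp

lemma laplace_aux_cont (t : ℝ) (ht : 0 < t) :
    ContinuousOn ((Set.Ioi (0:ℝ)).indicator (fun y => Real.exp (t * (1 - y⁻¹))))
      (Set.Icc (0:ℝ) 1) := by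
  set g := (Set.Ioi (0:ℝ)).indicator (fun y => Real.exp (t * (1 - y⁻¹))) with hg
  have hgeq : ∀ z : ℝ, 0 < z → g z = Real.exp (t * (1 - z⁻¹)) := fun z hz =>
    Set.indicator_of_mem hz _
  intro y hy
  rcases eq_or_lt_of_le hy.1 with h0 | h0
  · -- y = 0 case
    rw [← h0]
    have hg0 : g 0 = 0 := by
      simp [hg, Set.indicator_of_notMem, lt_irrefl]
    unfold ContinuousWithinAt
    rw [hg0]
    apply squeeze_zero' (g := fun y => Real.exp t / t * y)
    · exact Filter.Eventually.of_forall fun z => Set.indicator_nonneg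
        (fun z _ => (Real.exp_pos _).le) z
    · apply eventually_nhdsWithin_of_forall
      intro z hz
      rcases eq_or_lt_of_le hz.1 with hz0 | hz0
      · rw [← hz0]; simp [hg, Set.indicator_of_notMem, lt_irrefl]
      · rw [hgeq z hz0]
        exact laplace_aux_bound t ht z hz0
    · have : Tendsto (fun y : ℝ => Real.exp t / t * y) (𝓝 0) (𝓝 (Real.exp t / t * 0)) :=
        (continuous_const.mul continuous_id).tendsto 0
      simpa using this.mono_left nhdsWithin_le_nhds
  · -- 0 < y
    apply ContinuousAt.continuousWithinAt
    have hc : ContinuousAt (fun y : ℝ => Real.exp (t * (1 - y⁻¹))) y :=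
      (Real.continuous_exp.continuousAt.comp
        ((continuousAt_const.sub (continuousAt_inv₀ h0.ne')).const_mul t))
    apply hc.congr
    filter_upwards [Ioi_mem_nhds h0] with z hz
    exact (hgeq z hz).symm

/-- If finite positive measures `m_n` on `(−∞,0]` have the same total mass as `m` and the
moments `∫ (λ−x)^{−ℓ} dm_n` converge to those of `m` for all `λ > 0`, `ℓ ≥ 1`, then the
Laplace-type integrals converge: `∫ e^{tx} dm_n → ∫ e^{tx} dm` for all `t > 0`. -/
theorem laplace_convergence_of_resolvent_moments
    (mn : ℕ → Measure ℝ) (m : Measure ℝ)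
    (hsupp_n : ∀ n, mn n (Set.Ioi (0 : ℝ)) = 0)
    (hsupp : m (Set.Ioi (0 : ℝ)) = 0)
    (hfin : m Set.univ < ⊤)
    (hmass : ∀ n, mn n Set.univ = m Set.univ)
    (hmom : ∀ lam : ℝ, 0 < lam → ∀ l : ℕ, 1 ≤ l →
      Tendsto (fun n => ∫ x, ((lam - x)⁻¹) ^ l ∂(mn n)) atTop
        (𝓝 (∫ x, ((lam - x)⁻¹) ^ l ∂m))) :
    ∀ t : ℝ, 0 < t →
      Tendsto (fun n => ∫ x, Real.exp (t * x) ∂(mn n)) atTop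
        (𝓝 (∫ x, Real.exp (t * x) ∂m)) := by
  intro t ht
  have hfinm : IsFiniteMeasure m := ⟨hfin⟩
  have hfinn : ∀ n, IsFiniteMeasure (mn n) := fun n => ⟨by rw [hmass]; exact hfin⟩
  set φ : ℝ → ℝ := fun x => (1 - x)⁻¹ with hφdef
  have hφm : Measurable φ := (measurable_const.sub measurable_id).inv
  set g : ℝ → ℝ := (Set.Ioi (0:ℝ)).indicator (fun y => Real.exp (t * (1 - y⁻¹))) with hgdef
  have hgeq : ∀ z : ℝ, 0 < z → g z = Real.exp (t * (1 - z⁻¹)) := fun z hz =>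
    Set.indicator_of_mem hz _
  have hgm : Measurable g :=
    (Real.continuous_exp.measurable.comp
      ((measurable_const.sub measurable_inv).const_mul t)).indicator measurableSet_Ioi
  have hgnn : ∀ y, 0 ≤ g y := fun y =>
    Set.indicator_nonneg (fun z _ => (Real.exp_pos _).le) y
  have hgbd : ∀ y, ‖g y‖ ≤ Real.exp t := by
    intro y
    rw [Real.norm_eq_abs, abs_of_nonneg (hgnn y)]
    rcases le_or_gt y 0 with h | h
    · rw [hgdef, Set.indicator_of_notMem (by simpa using h)]
      exact (Real.exp_pos t).le
    · rw [hgeq y h]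
      apply Real.exp_le_exp.2
      have : 0 < y⁻¹ := by positivity
      nlinarith
  -- mapping facts
  have hmaps : ∀ x : ℝ, x ≤ 0 → φ x ∈ Set.Ioc (0:ℝ) 1 := by
    intro x hx
    have h1 : (1:ℝ) ≤ 1 - x := by linarith
    have h0 : (0:ℝ) < 1 - x := by linarith
    exact ⟨by positivity, inv_le_one_of_one_le₀ h1⟩
  have hφx : ∀ x : ℝ, φ x = (1 - x)⁻¹ := fun _ => rfl
  have hgφ : ∀ x : ℝ, x ≤ 0 → g (φ x) = Real.exp (t * x) := by
    intro x hx
    rw [hgeq _ (hmaps x hx).1, hφx x, inv_inv]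
    congr 1
    ring
  -- a.e. statements
  have hIoi : {x : ℝ | ¬ x ≤ 0} = Set.Ioi 0 := by ext x; simp [not_le]
  have haen : ∀ n, ∀ᵐ x ∂(mn n), x ≤ 0 := fun n => by
    rw [ae_iff, hIoi]; exact hsupp_n n
  have haem : ∀ᵐ x ∂m, x ≤ 0 := by rw [ae_iff, hIoi]; exact hsupp
  have haemap : ∀ (ρ : Measure ℝ), (∀ᵐ x ∂ρ, x ≤ 0) →
      ∀ᵐ y ∂(ρ.map φ), y ∈ Set.Ioc (0:ℝ) 1 := by
    intro ρ hρ
    exact (ae_map_iff hφm.aemeasurable measurableSet_Ioc).2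
      (hρ.mono fun x hx => hmaps x hx)
  have hmassmap : ∀ (ρ : Measure ℝ), (ρ.map φ) Set.univ = ρ Set.univ := by
    intro ρ
    rw [Measure.map_apply hφm MeasurableSet.univ, Set.preimage_univ]
  have hfinmap : ∀ (ρ : Measure ℝ), IsFiniteMeasure ρ → IsFiniteMeasure (ρ.map φ) := by
    intro ρ hρ
    exact ⟨by rw [hmassmap]; exact hρ.measure_univ_lt_top⟩
  -- integral transfer
  have I1 : ∀ (ρ : Measure ℝ), (∀ᵐ x ∂ρ, x ≤ 0) →
      ∫ y, g y ∂(ρ.map φ) = ∫ x, Real.exp (t * x) ∂ρ := by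
    intro ρ hρ
    rw [integral_map hφm.aemeasurable hgm.aestronglyMeasurable]
    exact integral_congr_ae (hρ.mono fun x hx => hgφ x hx)
  have I2 : ∀ (ρ : Measure ℝ) (l : ℕ),
      ∫ y, y ^ l ∂(ρ.map φ) = ∫ x, ((1 - x)⁻¹) ^ l ∂ρ := by
    intro ρ l
    exact integral_map (f := fun y => y ^ l) hφm.aemeasurable
      ((measurable_id.pow_const l).aestronglyMeasurable)
  -- monomial integrability and convergence
  have hmonoint : ∀ (ρ : Measure ℝ), IsFiniteMeasure ρ → (∀ᵐ y ∂ρ, y ∈ Set.Ioc (0:ℝ) 1) →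
      ∀ i : ℕ, Integrable (fun y => y ^ i) ρ := by
    intro ρ hρ hae i
    haveI := hρ
    refine (integrable_const (1:ℝ)).mono'
      ((measurable_id.pow_const i).aestronglyMeasurable) ?_
    refine hae.mono fun y hy => ?_
    rw [Real.norm_eq_abs, abs_of_nonneg (pow_nonneg hy.1.le _)]
    exact pow_le_one₀ hy.1.le hy.2
  have hmono : ∀ l : ℕ, Tendsto (fun n => ∫ y, y ^ l ∂((mn n).map φ)) atTop
      (𝓝 (∫ y, y ^ l ∂(m.map φ))) := by
    intro l
    rcases Nat.eq_zero_or_pos l with hl | hl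
    · subst hl
      have hval : ∀ (ρ : Measure ℝ), ρ Set.univ = m Set.univ →
          ∫ y, y ^ (0:ℕ) ∂(ρ.map φ) = (m Set.univ).toReal := by
        intro ρ hρ
        simp only [pow_zero]
        rw [integral_const, smul_eq_mul, mul_one, Measure.real, hmassmap, hρ]
      simp only [fun n => hval (mn n) (hmass n), hval m rfl]
      exact tendsto_const_nhds
    · simp only [fun n => I2 (mn n) l, I2 m l]
      exact hmom 1 one_pos l hl
  -- polynomial integrals
  have hpeval : ∀ (p : Polynomial ℝ) (ρ : Measure ℝ), IsFiniteMeasure ρ →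
      (∀ᵐ y ∂ρ, y ∈ Set.Ioc (0:ℝ) 1) →
      ∫ y, p.eval y ∂ρ =
        ∑ i ∈ Finset.range (p.natDegree + 1), p.coeff i * ∫ y, y ^ i ∂ρ := by
    intro p ρ hρ hae
    have hev : ∀ y : ℝ, p.eval y = ∑ i ∈ Finset.range (p.natDegree + 1),
        p.coeff i * y ^ i := fun y => Polynomial.eval_eq_sum_range y
    simp only [hev]
    rw [integral_finset_sum _ fun i _ => (hmonoint ρ hρ hae i).const_mul _]
    exact Finset.sum_congr rfl fun i _ => integral_const_mul _ _
  have hpintg : ∀ (p : Polynomial ℝ) (ρ : Measure ℝ), IsFiniteMeasure ρ →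
      (∀ᵐ y ∂ρ, y ∈ Set.Ioc (0:ℝ) 1) → Integrable (fun y => p.eval y) ρ := by
    intro p ρ hρ hae
    have hev : ∀ y : ℝ, p.eval y = ∑ i ∈ Finset.range (p.natDegree + 1),
        p.coeff i * y ^ i := fun y => Polynomial.eval_eq_sum_range y
    simp only [hev]
    exact integrable_finset_sum _ fun i _ => (hmonoint ρ hρ hae i).const_mul _
  have hpoly : ∀ p : Polynomial ℝ,
      Tendsto (fun n => ∫ y, p.eval y ∂((mn n).map φ)) atTop
        (𝓝 (∫ y, p.eval y ∂(m.map φ))) := by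
    intro p
    simp only [fun n => hpeval p ((mn n).map φ) (hfinmap _ (hfinn n)) (haemap _ (haen n)),
      hpeval p (m.map φ) (hfinmap _ hfinm) (haemap _ haem)]
    exact tendsto_finset_sum _ fun i _ => (hmono i).const_mul _
  -- reduce goal to integrals of g
  have e1 : ∀ n, ∫ x, Real.exp (t * x) ∂(mn n) = ∫ y, g y ∂((mn n).map φ) :=
    fun n => (I1 (mn n) (haen n)).symm
  have e2 : ∫ x, Real.exp (t * x) ∂m = ∫ y, g y ∂(m.map φ) := (I1 m haem).symm
  rw [e2]
  simp only [e1]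
  -- epsilon argument
  rw [Metric.tendsto_nhds]
  intro ε hε
  set M := (m Set.univ).toReal with hM
  have hM0 : 0 ≤ M := ENNReal.toReal_nonneg
  have hε' : 0 < ε / (4 * (M + 1)) := by positivity
  obtain ⟨p, hp⟩ := exists_polynomial_near_of_continuousOn 0 1 g
    (laplace_aux_cont t ht) _ hε'
  have hgint : ∀ (ρ : Measure ℝ), IsFiniteMeasure ρ → Integrable g ρ := by
    intro ρ hρ
    haveI := hρ
    exact (integrable_const (Real.exp t)).mono' hgm.aestronglyMeasurable
      (Filter.Eventually.of_forall hgbd)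
  have hbound : ∀ (ρ : Measure ℝ), IsFiniteMeasure ρ → ρ Set.univ = m Set.univ →
      (∀ᵐ y ∂ρ, y ∈ Set.Ioc (0:ℝ) 1) →
      |(∫ y, g y ∂ρ) - ∫ y, p.eval y ∂ρ| ≤ ε / 4 := by
    intro ρ hρ hmassρ hae
    haveI := hρ
    rw [← integral_sub (hgint ρ hρ) (hpintg p ρ hρ hae)]
    have hb : ∀ᵐ y ∂ρ, ‖g y - p.eval y‖ ≤ ε / (4 * (M + 1)) := by
      refine hae.mono fun y hy => ?_
      rw [Real.norm_eq_abs, abs_sub_comm]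
      exact (hp y ⟨hy.1.le, hy.2⟩).le
    have := norm_integral_le_of_norm_le_const hb
    rw [Real.norm_eq_abs] at this
    calc |∫ y, (g y - p.eval y) ∂ρ| ≤ ε / (4 * (M + 1)) * (ρ Set.univ).toReal := this
      _ = ε / (4 * (M + 1)) * M := by rw [hmassρ]
      _ ≤ ε / (4 * (M + 1)) * (M + 1) := by
          exact mul_le_mul_of_nonneg_left (by linarith) hε'.le
      _ = ε / 4 := by field_simp
  have hc := hpoly p
  rw [Metric.tendsto_nhds] at hc
  filter_upwards [hc (ε / 2) (by positivity)] with n hn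
  have b1 := hbound ((mn n).map φ) (hfinmap _ (hfinn n))
    (by rw [hmassmap]; exact hmass n) (haemap _ (haen n))
  have b2 := hbound (m.map φ) (hfinmap _ hfinm) (by rw [hmassmap]) (haemap _ haem)
  rw [Real.dist_eq] at hn ⊢
  set A := ∫ y, g y ∂((mn n).map φ) with hA
  set B := ∫ y, Polynomial.eval y p ∂((mn n).map φ) with hB
  set C := ∫ y, Polynomial.eval y p ∂(m.map φ) with hC
  set D := ∫ y, g y ∂(m.map φ) with hD
  have h3 : |C - D| ≤ ε / 4 := by rw [abs_sub_comm]; exact b2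
  have t1 : |A - D| ≤ |A - B| + |B - D| := abs_sub_le _ _ _
  have t2 : |B - D| ≤ |B - C| + |C - D| := abs_sub_le _ _ _
  linarith
end
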